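/- If G is a 2-connected house-minor-free graph that contains a cycle of length at least 5, then G is itself a cycle (i.e., G is connected and every vertex of G has degree exactly 2). -/

import Mathlib

open SimpleGraph

variable {α β : Type*}

/-- A model of `H` in `G`: a family of pairwise disjoint nonempty vertex subsets of `G`,
each inducing a connected subgraph, such that for every edge `h h'` of `H` there is an
edge of `G` between `V h` and `V h'`. -/
def IsMinorModel (G : SimpleGraph α) (H : SimpleGraph β) (V : β → Set α) : Prop :=
  (∀ h, (V h).Nonempty) ∧
  (Pairwise fun h h' => Disjoint (V h) (V h')) ∧
  (∀ h, (G.induce (V h)).Connected) ∧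
  ∀ h h', H.Adj h h' → ∃ x ∈ V h, ∃ y ∈ V h', G.Adj x y

/-- `H` is a minor of `G`. -/
def HasMinor (G : SimpleGraph α) (H : SimpleGraph β) : Prop :=
  ∃ V : β → Set α, IsMinorModel G H V

/-- `G` is `H`-minimal: `H` is a minor of `G`, but for every vertex `x` of `G`,
`H` is not a minor of `G − x`. -/
def MinorMinimal (G : SimpleGraph α) (H : SimpleGraph β) : Prop :=
  HasMinor G H ∧ ∀ x : α, ¬ HasMinor (G.induce {y | y ≠ x}) H

/-- A graph is 2-connected if it has at least 3 vertices, is connected, and stays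
connected after deleting any single vertex. -/
def TwoConnected [Fintype α] (G : SimpleGraph α) : Prop :=
  3 ≤ Fintype.card α ∧ G.Connected ∧ ∀ v : α, (G.induce {w | w ≠ v}).Connected

/-- `G` is a cycle: connected and 2-regular. -/
def IsCycleGraph (G : SimpleGraph α) : Prop :=
  G.Connected ∧ ∀ v : α, (G.neighborSet v).ncard = 2

/-- The house: a 4-cycle `0-1-2-3-0` plus a vertex `4` adjacent to the two
consecutive vertices `0` and `1`. -/
def houseGraph : SimpleGraph (Fin 5) :=
  fromEdgeSet {s(0, 1), s(1, 2), s(2, 3), s(3, 0), s(4, 0), s(4, 1)}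

section HouseHelpers


lemma edge_of_length_one {G : SimpleGraph α} {u y : α} (q : G.Walk u y) (h : q.length = 1) :
    s(u, y) ∈ q.edges := by
  cases q with
  | nil => simp at h
  | cons h' r =>
    cases r with
    | nil => simp
    | cons h'' r' => simp [Walk.length_cons] at h

lemma edge_start_eq {G : SimpleGraph α} {v a z w : α} (h' : G.Adj v w) (r : G.Walk w a)
    (hq : (Walk.cons h' r).IsPath) (h : s(v, z) ∈ (Walk.cons h' r).edges) : z = w := by
  rw [Walk.edges_cons, List.mem_cons] at h
  rcases h with h | h
  · rw [Sym2.eq_iff] at h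
    rcases h with ⟨-, rfl⟩ | ⟨rfl, rfl⟩
    · rfl
    · exact absurd rfl h'.ne
  · exact absurd (Walk.fst_mem_support_of_mem_edges r h)
      ((Walk.cons_isPath_iff h' r).mp hq).2

lemma cross_edge {G : SimpleGraph α} {S : Set α} {v x : α} (q : G.Walk v x) :
    v ∉ S → x ∈ S → ∃ w u, w ∉ S ∧ u ∈ S ∧ G.Adj w u := by
  induction q with
  | nil => intro h1 h2; exact absurd h2 h1
  | @cons a b c h r ih =>
    intro h1 h2
    by_cases hb : b ∈ S
    · exact ⟨a, b, h1, hb, h⟩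
    · exact ih hb h2

lemma trim_walk {G : SimpleGraph α} {S : Set α} {t : α} :
    ∀ {w : α} (p : G.Walk w t), p.IsPath → w ∉ S → t ∈ S →
    ∃ y, y ∈ S ∧ ∃ p' : G.Walk w y, p'.IsPath ∧
      (∀ z ∈ p'.support, z ≠ y → z ∉ S) ∧ p'.support ⊆ p.support := by
  intro w p
  induction p with
  | nil => intro _ h1 h2; exact absurd h2 h1
  | @cons a b c h r ih =>
    intro hp h1 h2
    by_cases hb : b ∈ S
    · refine ⟨b, hb, Walk.cons h Walk.nil, ?_, ?_, ?_⟩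
      · simp [h.ne]
      · intro z hz hzb
        simp [Walk.support_cons, Walk.support_nil] at hz
        rcases hz with rfl | rfl
        · exact h1
        · exact absurd rfl hzb
      · intro z hz
        simp [Walk.support_cons, Walk.support_nil] at hz
        rcases hz with rfl | rfl
        · exact Walk.start_mem_support _
        · rw [Walk.support_cons]
          exact List.mem_cons_of_mem _ (Walk.start_mem_support r)
    · obtain ⟨y, hy, p', hp', hcond, hsub⟩ := ih ((Walk.cons_isPath_iff h r).mp hp).1 hb h2
      refine ⟨y, hy, Walk.cons h p', ?_, ?_, ?_⟩
      · rw [Walk.cons_isPath_iff]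
        exact ⟨hp', fun ha => ((Walk.cons_isPath_iff h r).mp hp).2 (hsub ha)⟩
      · intro z hz hzy
        rw [Walk.support_cons, List.mem_cons] at hz
        rcases hz with rfl | hz
        · exact h1
        · exact hcond z hz hzy
      · intro z hz
        rw [Walk.support_cons, List.mem_cons] at hz ⊢
        rcases hz with rfl | hz
        · exact Or.inl rfl
        · exact Or.inr (hsub hz)

lemma theta_house {G : SimpleGraph α} {x y : α} (hxy : x ≠ y)
    (Q1 Q2 Q3 : G.Walk x y) (h1p : Q1.IsPath) (h2p : Q2.IsPath) (h3p : Q3.IsPath)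
    (h1l : 3 ≤ Q1.length) (h3l : 2 ≤ Q3.length)
    (d12 : ∀ v, v ∈ Q1.support → v ∈ Q2.support → v = x ∨ v = y)
    (d13 : ∀ v, v ∈ Q1.support → v ∈ Q3.support → v = x ∨ v = y)
    (d23 : ∀ v, v ∈ Q2.support → v ∈ Q3.support → v = x ∨ v = y) :
    HasMinor G houseGraph := by
  classical
  -- decompose Q2 from the y-side
  obtain ⟨v0, hyv0, V2, hV2⟩ := Walk.exists_eq_cons_of_ne hxy.symm Q2.reverse
  have hsup2 : ∀ z, z ∈ Q2.support ↔ z = y ∨ z ∈ V2.support := by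
    intro z
    rw [← List.mem_reverse, ← Walk.support_reverse, hV2, Walk.support_cons]
    simp
  have hynV2 : y ∉ V2.support := by
    have := h2p.reverse
    rw [hV2, Walk.cons_isPath_iff] at this
    exact this.2
  have hxV2 : x ∈ V2.support := Walk.end_mem_support V2
  -- decompose Q1
  obtain ⟨w, hxw, T, hT⟩ := Walk.exists_eq_cons_of_ne hxy Q1
  have hTp : T.IsPath ∧ x ∉ T.support := by
    have := h1p; rw [hT, Walk.cons_isPath_iff] at this; exact this
  have hTlen : T.length + 1 = Q1.length := by rw [hT, Walk.length_cons]
  have hwy : w ≠ y := by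
    rintro rfl
    have := (Walk.isPath_iff_eq_nil (p := T)).mp hTp.1
    rw [this] at hTlen
    simp at hTlen; omega
  obtain ⟨z, hyz, U, hU⟩ := Walk.exists_eq_cons_of_ne hwy.symm T.reverse
  have hUp : U.IsPath ∧ y ∉ U.support := by
    have := hTp.1.reverse; rw [hU, Walk.cons_isPath_iff] at this; exact this
  have hsupT : ∀ v, v ∈ T.support ↔ v = y ∨ v ∈ U.support := by
    intro v
    rw [← List.mem_reverse, ← Walk.support_reverse, hU, Walk.support_cons]
    simp
  have hUlen : U.length + 1 = T.length := by
    have : T.reverse.length = U.length + 1 := by rw [hU, Walk.length_cons]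
    rw [Walk.length_reverse] at this; omega
  have hzw : z ≠ w := by
    rintro rfl
    have := (Walk.isPath_iff_eq_nil (p := U)).mp hUp.1
    rw [this] at hUlen; simp at hUlen; omega
  obtain ⟨z2, hzz2, W, hW⟩ := Walk.exists_eq_cons_of_ne hzw U
  have hWp : W.IsPath ∧ z ∉ W.support := by
    have := hUp.1; rw [hW, Walk.cons_isPath_iff] at this; exact this
  have hWsub : ∀ v, v ∈ W.support → v ∈ U.support := by
    intro v hv; rw [hW, Walk.support_cons]; exact List.mem_cons_of_mem _ hv
  -- facts about Q1-pieces
  have hQ1mem : ∀ v, v ∈ U.support → v ∈ Q1.support := by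
    intro v hv
    rw [hT, Walk.support_cons, List.mem_cons]
    exact Or.inr ((hsupT v).mpr (Or.inr hv))
  have hUx : ∀ v, v ∈ U.support → v ≠ x := by
    intro v hv h
    exact hTp.2 (h ▸ (hsupT v).mpr (Or.inr hv))
  have hUy : ∀ v, v ∈ U.support → v ≠ y := fun v hv h => hUp.2 (h ▸ hv)
  have hzU : z ∈ U.support := Walk.start_mem_support U
  -- decompose Q3
  obtain ⟨s, hxs, R, hR⟩ := Walk.exists_eq_cons_of_ne hxy Q3
  have hRp : R.IsPath ∧ x ∉ R.support := by
    have := h3p; rw [hR, Walk.cons_isPath_iff] at this; exact this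
  have hRlen : R.length + 1 = Q3.length := by rw [hR, Walk.length_cons]
  have hsy : s ≠ y := by
    rintro rfl
    have := (Walk.isPath_iff_eq_nil (p := R)).mp hRp.1
    rw [this] at hRlen; simp at hRlen; omega
  obtain ⟨t, hyt, M, hM⟩ := Walk.exists_eq_cons_of_ne hsy.symm R.reverse
  have hMp : M.IsPath ∧ y ∉ M.support := by
    have := hRp.1.reverse; rw [hM, Walk.cons_isPath_iff] at this; exact this
  have hsupR : ∀ v, v ∈ R.support ↔ v = y ∨ v ∈ M.support := by
    intro v
    rw [← List.mem_reverse, ← Walk.support_reverse, hM, Walk.support_cons]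
    simp
  have hQ3mem : ∀ v, v ∈ M.support → v ∈ Q3.support := by
    intro v hv
    rw [hR, Walk.support_cons, List.mem_cons]
    exact Or.inr ((hsupR v).mpr (Or.inr hv))
  have hMx : ∀ v, v ∈ M.support → v ≠ x := by
    intro v hv h
    exact hRp.2 (h ▸ (hsupR v).mpr (Or.inr hv))
  have hMy : ∀ v, v ∈ M.support → v ≠ y := fun v hv h => hMp.2 (h ▸ hv)
  -- V2 facts
  have hQ2mem : ∀ v, v ∈ V2.support → v ∈ Q2.support := fun v hv => (hsup2 v).mpr (Or.inr hv)
  have hV2y : ∀ v, v ∈ V2.support → v ≠ y := fun v hv h => hynV2 (h ▸ hv)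
  -- the five branch sets
  set S0 : Set α := {v | v ∈ V2.support} with hS0
  set S1 : Set α := {v | v ∈ (Walk.nil : G.Walk y y).support} with hS1
  set S2 : Set α := {v | v ∈ (Walk.nil : G.Walk z z).support} with hS2
  set S3 : Set α := {v | v ∈ W.support} with hS3
  set S4 : Set α := {v | v ∈ M.support} with hS4
  have hS1' : ∀ v, v ∈ S1 ↔ v = y := by intro v; simp [hS1]
  have hS2' : ∀ v, v ∈ S2 ↔ v = z := by intro v; simp [hS2]
  -- memberships
  have hzQ1 := hQ1mem z hzU
  have hznex := hUx z hzU
  have hzney := hUy z hzU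
  have hS3sub : ∀ v, v ∈ S3 → v ∈ Q1.support ∧ v ≠ x ∧ v ≠ y := by
    intro v hv
    exact ⟨hQ1mem v (hWsub v hv), hUx v (hWsub v hv), hUy v (hWsub v hv)⟩
  have hS4sub : ∀ v, v ∈ S4 → v ∈ Q3.support ∧ v ≠ x ∧ v ≠ y := by
    intro v hv
    exact ⟨hQ3mem v hv, hMx v hv, hMy v hv⟩
  have hS0sub : ∀ v, v ∈ S0 → v ∈ Q2.support ∧ v ≠ y := by
    intro v hv
    exact ⟨hQ2mem v hv, hV2y v hv⟩
  refine ⟨fun i => if i = 0 then S0 else if i = 1 then S1 else if i = 2 then S2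
    else if i = 3 then S3 else S4, ?_, ?_, ?_, ?_⟩
  · intro i
    fin_cases i <;> simp only [if_pos, if_neg, reduceIte]
    · exact ⟨v0, Walk.start_mem_support V2⟩
    · exact ⟨y, (hS1' y).mpr rfl⟩
    · exact ⟨z, (hS2' z).mpr rfl⟩
    · exact ⟨z2, Walk.start_mem_support W⟩
    · exact ⟨t, Walk.start_mem_support M⟩
  · -- pairwise disjoint
    have D01 : Disjoint S0 S1 := by
      rw [Set.disjoint_left]; intro v hv hv1
      exact (hS0sub v hv).2 ((hS1' v).mp hv1)
    have D02 : Disjoint S0 S2 := by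
      rw [Set.disjoint_left]; intro v hv hv2
      rcases d12 v (((hS2' v).mp hv2) ▸ hzQ1) (hS0sub v hv).1 with rfl | rfl
      · exact hznex ((hS2' v).mp hv2).symm
      · exact (hS0sub v hv).2 rfl
    have D03 : Disjoint S0 S3 := by
      rw [Set.disjoint_left]; intro v hv hv3
      rcases d12 v (hS3sub v hv3).1 (hS0sub v hv).1 with rfl | rfl
      · exact (hS3sub v hv3).2.1 rfl
      · exact (hS3sub v hv3).2.2 rfl
    have D04 : Disjoint S0 S4 := by
      rw [Set.disjoint_left]; intro v hv hv4
      rcases d23 v (hS0sub v hv).1 (hS4sub v hv4).1 with rfl | rfl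
      · exact (hS4sub v hv4).2.1 rfl
      · exact (hS4sub v hv4).2.2 rfl
    have D12' : Disjoint S1 S2 := by
      rw [Set.disjoint_left]; intro v hv1 hv2
      exact hzney (((hS2' v).mp hv2) ▸ ((hS1' v).mp hv1))
    have D13 : Disjoint S1 S3 := by
      rw [Set.disjoint_left]; intro v hv1 hv3
      exact (hS3sub v hv3).2.2 ((hS1' v).mp hv1)
    have D14 : Disjoint S1 S4 := by
      rw [Set.disjoint_left]; intro v hv1 hv4
      exact (hS4sub v hv4).2.2 ((hS1' v).mp hv1)
    have D23 : Disjoint S2 S3 := by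
      rw [Set.disjoint_left]; intro v hv2 hv3
      exact hWp.2 (((hS2' v).mp hv2) ▸ hv3)
    have D24 : Disjoint S2 S4 := by
      rw [Set.disjoint_left]; intro v hv2 hv4
      rcases d13 v (((hS2' v).mp hv2) ▸ hzQ1) (hS4sub v hv4).1 with rfl | rfl
      · exact hznex ((hS2' v).mp hv2).symm
      · exact hzney ((hS2' v).mp hv2).symm
    have D34 : Disjoint S3 S4 := by
      rw [Set.disjoint_left]; intro v hv3 hv4
      rcases d13 v (hS3sub v hv3).1 (hS4sub v hv4).1 with rfl | rfl
      · exact (hS3sub v hv3).2.1 rfl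
      · exact (hS3sub v hv3).2.2 rfl
    intro i j hij
    fin_cases i <;> fin_cases j <;> simp only [reduceIte] <;>
      first
        | exact absurd rfl hij
        | exact D01 | exact D02 | exact D03 | exact D04
        | exact D12' | exact D13 | exact D14
        | exact D23 | exact D24 | exact D34
        | exact D01.symm | exact D02.symm | exact D03.symm | exact D04.symm
        | exact D12'.symm | exact D13.symm | exact D14.symm
        | exact D23.symm | exact D24.symm | exact D34.symm
  · intro i
    fin_cases i <;> simp only [reduceIte]
    · exact V2.connected_induce_support
    · exact (Walk.nil : G.Walk y y).connected_induce_support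
    · exact (Walk.nil : G.Walk z z).connected_induce_support
    · exact W.connected_induce_support
    · exact M.connected_induce_support
  · intro i j hadj
    rw [houseGraph, fromEdgeSet_adj] at hadj
    have hmem := hadj.1
    have e01 : ∃ a ∈ S0, ∃ b ∈ S1, G.Adj a b :=
      ⟨v0, Walk.start_mem_support V2, y, (hS1' y).mpr rfl, hyv0.symm⟩
    have e12 : ∃ a ∈ S1, ∃ b ∈ S2, G.Adj a b :=
      ⟨y, (hS1' y).mpr rfl, z, (hS2' z).mpr rfl, hyz⟩
    have e23 : ∃ a ∈ S2, ∃ b ∈ S3, G.Adj a b :=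
      ⟨z, (hS2' z).mpr rfl, z2, Walk.start_mem_support W, hzz2⟩
    have e30 : ∃ a ∈ S3, ∃ b ∈ S0, G.Adj a b :=
      ⟨w, Walk.end_mem_support W, x, hxV2, hxw.symm⟩
    have e40 : ∃ a ∈ S4, ∃ b ∈ S0, G.Adj a b :=
      ⟨s, Walk.end_mem_support M, x, hxV2, hxs.symm⟩
    have e41 : ∃ a ∈ S4, ∃ b ∈ S1, G.Adj a b :=
      ⟨t, Walk.start_mem_support M, y, (hS1' y).mpr rfl, hyt.symm⟩
    have sw : ∀ (P Q : Set α), (∃ a ∈ P, ∃ b ∈ Q, G.Adj a b) → ∃ a ∈ Q, ∃ b ∈ P, G.Adj a b := by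
      rintro P Q ⟨a, ha, b, hb, hab⟩; exact ⟨b, hb, a, ha, hab.symm⟩
    simp only [Set.mem_insert_iff, Set.mem_singleton_iff, Sym2.eq_iff] at hmem
    fin_cases i <;> fin_cases j <;>
      first
        | exact absurd hmem (by decide)
        | (simp only [reduceIte]
           first
             | exact e01 | exact e12 | exact e23 | exact e30 | exact e40 | exact e41
             | exact sw _ _ e01 | exact sw _ _ e12 | exact sw _ _ e23
             | exact sw _ _ e30 | exact sw _ _ e40 | exact sw _ _ e41)

lemma ear_house {G : SimpleGraph α} {x0 : α} (c : G.Walk x0 x0) (hc : c.IsCycle)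
    (hlen : 5 ≤ c.length) {u y : α} (p : G.Walk u y) (hp : p.IsPath) (huy : u ≠ y)
    (hu : u ∈ c.support) (hy : y ∈ c.support)
    (hint : ∀ v ∈ p.support, v ≠ u → v ≠ y → v ∉ c.support)
    (hchord : p.length = 1 → s(u, y) ∉ c.edges) : HasMinor G houseGraph := by
  classical
  set d := c.rotate u hu with hdd
  have hdc : d.IsCycle := hc.rotate hu
  have hdlen : d.length = c.length := by
    rw [hdd]; unfold Walk.rotate
    rw [Walk.length_append, Nat.add_comm, ← Walk.length_append, Walk.take_spec]
  have hedges : ∀ e, e ∈ d.edges ↔ e ∈ c.edges := fun e => (Walk.rotate_edges c u hu).mem_iff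
  -- support sets agree
  have hctail : ∀ v, v ∈ c.support ↔ v ∈ c.support.tail := by
    intro v
    constructor
    · intro hv
      rw [Walk.support_eq_cons c, List.mem_cons] at hv
      rcases hv with rfl | hv
      · obtain ⟨w1, h1, q1, hq1⟩ := Walk.not_nil_iff.mp
          ((Walk.not_nil_iff_lt_length (p := c)).mpr (by omega))
        rw [hq1, Walk.support_cons]
        exact Walk.end_mem_support q1
      · exact hv
    · intro hv
      rw [Walk.support_eq_cons c, List.mem_cons]
      exact Or.inr hv
  have hdtail : ∀ v, v ∈ d.support ↔ v ∈ d.support.tail := by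
    intro v
    constructor
    · intro hv
      rw [Walk.support_eq_cons d, List.mem_cons] at hv
      rcases hv with rfl | hv
      · obtain ⟨w1, h1, q1, hq1⟩ := Walk.not_nil_iff.mp
          ((Walk.not_nil_iff_lt_length (p := d)).mpr (by omega))
        rw [hq1, Walk.support_cons]
        exact Walk.end_mem_support q1
      · exact hv
    · intro hv
      rw [Walk.support_eq_cons d, List.mem_cons]
      exact Or.inr hv
  have hsupp : ∀ v, v ∈ d.support ↔ v ∈ c.support := by
    intro v
    rw [hdtail v, hctail v]
    exact (Walk.support_rotate c u hu).mem_iff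
  -- decompose d
  obtain ⟨a, hua, t, hdt⟩ := Walk.not_nil_iff.mp
    ((Walk.not_nil_iff_lt_length (p := d)).mpr (by omega))
  have htp : t.IsPath := by
    rw [Walk.isPath_def]
    have := hdc.support_nodup
    rwa [hdt, Walk.support_cons, List.tail_cons] at this
  have hyt : y ∈ t.support := by
    have : y ∈ d.support := (hsupp y).mpr hy
    rw [hdt, Walk.support_cons, List.mem_cons] at this
    rcases this with rfl | h
    · exact absurd rfl huy.symm
    · exact h
  set tk := t.takeUntil y hyt with htk
  set dp := t.dropUntil y hyt with hdp
  have hspec : tk.append dp = t := Walk.take_spec t hyt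
  have htsup : t.support = tk.support ++ dp.support.tail := by
    rw [← hspec, Walk.support_append]
  have hdisj : ∀ v, v ∈ tk.support → v ∈ dp.support.tail → False := by
    intro v h1 h2
    have := htp.support_nodup
    rw [htsup, List.nodup_append] at this
    exact this.2.2 v h1 v h2 rfl
  have hudp : u ∈ dp.support.tail := Walk.end_mem_tail_support_of_ne huy.symm dp
  have hAp : (Walk.cons hua tk).IsPath := by
    rw [Walk.cons_isPath_iff]
    exact ⟨htp.takeUntil hyt, fun h => hdisj u h hudp⟩
  have hBp : dp.reverse.IsPath := (htp.dropUntil hyt).reverse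
  set A := Walk.cons hua tk with hA
  set B := dp.reverse with hB
  have hABlen : A.length + B.length = c.length := by
    have h1 : tk.length + dp.length = t.length := by
      rw [← hspec, Walk.length_append]
    have h2 : t.length + 1 = d.length := by rw [hdt, Walk.length_cons]
    rw [hA, hB, Walk.length_cons, Walk.length_reverse, ← hdlen]
    omega
  have hAc : ∀ v, v ∈ A.support → v ∈ c.support := by
    intro v hv
    rw [hA, Walk.support_cons, List.mem_cons] at hv
    apply (hsupp v).mp
    rw [hdt, Walk.support_cons, List.mem_cons]
    rcases hv with rfl | hv
    · exact Or.inl rfl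
    · exact Or.inr (Walk.support_takeUntil_subset t hyt hv)
  have hBc : ∀ v, v ∈ B.support → v ∈ c.support := by
    intro v hv
    rw [hB, Walk.support_reverse, List.mem_reverse] at hv
    apply (hsupp v).mp
    rw [hdt, Walk.support_cons, List.mem_cons]
    exact Or.inr (Walk.support_dropUntil_subset t hyt hv)
  have hAe : ∀ e, e ∈ A.edges → e ∈ c.edges := by
    intro e he
    rw [hA, Walk.edges_cons, List.mem_cons] at he
    apply (hedges e).mp
    rw [hdt, Walk.edges_cons, List.mem_cons]
    rcases he with rfl | he
    · exact Or.inl rfl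
    · exact Or.inr (Walk.edges_takeUntil_subset t hyt he)
  have hBe : ∀ e, e ∈ B.edges → e ∈ c.edges := by
    intro e he
    rw [hB, Walk.edges_reverse, List.mem_reverse] at he
    apply (hedges e).mp
    rw [hdt, Walk.edges_cons, List.mem_cons]
    exact Or.inr (Walk.edges_dropUntil_subset t hyt he)
  -- internal disjointness of A and B
  have hAB : ∀ v, v ∈ A.support → v ∈ B.support → v = u ∨ v = y := by
    intro v hvA hvB
    rw [hA, Walk.support_cons, List.mem_cons] at hvA
    rw [hB, Walk.support_reverse, List.mem_reverse] at hvB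
    rcases hvA with rfl | hvA
    · exact Or.inl rfl
    · rw [Walk.support_eq_cons dp, List.mem_cons] at hvB
      rcases hvB with rfl | hvB
      · exact Or.inr rfl
      · exact absurd (hdisj v hvA hvB) not_false
  -- ear vs arcs
  have hpA : ∀ v, v ∈ p.support → v ∈ A.support → v = u ∨ v = y := by
    intro v hv hvA
    by_cases h1 : v = u
    · exact Or.inl h1
    · by_cases h2 : v = y
      · exact Or.inr h2
      · exact absurd (hAc v hvA) (hint v hv h1 h2)
  have hpB : ∀ v, v ∈ p.support → v ∈ B.support → v = u ∨ v = y := by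
    intro v hv hvB
    by_cases h1 : v = u
    · exact Or.inl h1
    · by_cases h2 : v = y
      · exact Or.inr h2
      · exact absurd (hBc v hvB) (hint v hv h1 h2)
  have hplen : 1 ≤ p.length := by
    rcases Nat.eq_zero_or_pos p.length with h | h
    · exact absurd (Walk.eq_of_length_eq_zero h) huy
    · exact h
  have hAlen1 : 1 ≤ A.length := by rw [hA, Walk.length_cons]; omega
  have hBlen1 : 1 ≤ B.length := by
    rcases Nat.eq_zero_or_pos B.length with h | h
    · exact absurd (Walk.eq_of_length_eq_zero h) huy
    · exact h
  by_cases hl : 2 ≤ p.length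
  · rcases le_or_gt 3 A.length with h3 | h3
    · exact theta_house huy A B p hAp hBp hp h3 hl hAB
        (fun v h1 h2 => hpA v h2 h1) (fun v h1 h2 => hpB v h2 h1)
    · exact theta_house huy B A p hBp hAp hp (by omega) hl
        (fun v h1 h2 => hAB v h2 h1)
        (fun v h1 h2 => hpB v h2 h1) (fun v h1 h2 => hpA v h2 h1)
  · have hl1 : p.length = 1 := by omega
    have hcd := hchord hl1
    have hAlen2 : 2 ≤ A.length := by
      rcases le_or_gt 2 A.length with h | h
      · exact h
      · have hA1 : A.length = 1 := by omega
        exact absurd (hAe _ (edge_of_length_one A hA1)) hcd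
    have hBlen2 : 2 ≤ B.length := by
      rcases le_or_gt 2 B.length with h | h
      · exact h
      · have hB1 : B.length = 1 := by omega
        exact absurd (hBe _ (edge_of_length_one B hB1)) hcd
    rcases le_or_gt 3 A.length with h3 | h3
    · exact theta_house huy A p B hAp hp hBp h3 hBlen2
        (fun v h1 h2 => hpA v h2 h1) hAB hpB
    · exact theta_house huy B p A hBp hp hAp (by omega) hAlen2
        (fun v h1 h2 => hpB v h2 h1) (fun v h1 h2 => hAB v h2 h1) hpA

theorem house_free_main (G : SimpleGraph α)
    (hconn : G.Connected) (hdel : ∀ v : α, (G.induce {w | w ≠ v}).Connected)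
    (hfree : ¬ HasMinor G houseGraph)
    (hcyc : ∃ (x : α) (c : G.Walk x x), c.IsCycle ∧ 5 ≤ c.length) :
    G.Connected ∧ ∀ v : α, (G.neighborSet v).ncard = 2 := by
  classical
  obtain ⟨x0, c, hc, hlen⟩ := hcyc
  -- every vertex is on the cycle
  have claim1 : ∀ v : α, v ∈ c.support := by
    by_contra hcon
    push_neg at hcon
    obtain ⟨v, hv⟩ := hcon
    obtain ⟨q⟩ := hconn.preconnected v x0
    obtain ⟨w, u, hw, hu, hwu⟩ :=
      cross_edge (S := {z | z ∈ c.support}) q hv (Walk.start_mem_support c)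
    -- pick a cycle vertex different from u
    have htl : 2 ≤ c.support.tail.length := by
      have h1 := Walk.length_support c
      have h2 : c.support.tail.length + 1 = c.support.length := by
        rw [Walk.support_eq_cons c]; simp
      omega
    obtain ⟨z1, l1, hzz1⟩ : ∃ z1 l1, c.support.tail = z1 :: l1 := by
      cases hl : c.support.tail with
      | nil => rw [hl] at htl; simp at htl
      | cons a1 t1 => first | exact ⟨a1, t1, hl⟩ | exact ⟨a1, t1, rfl⟩
    obtain ⟨z2, rest, hzz2⟩ : ∃ z2 rest, l1 = z2 :: rest := by
      cases hl : l1 with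
      | nil => rw [hzz1, hl] at htl; simp at htl
      | cons a2 t2 => first | exact ⟨a2, t2, hl⟩ | exact ⟨a2, t2, rfl⟩
    have hzz : c.support.tail = z1 :: z2 :: rest := by rw [hzz1, hzz2]
    have hz12 : z1 ≠ z2 := by
      have := hc.support_nodup
      rw [hzz, List.nodup_cons] at this
      exact fun h => this.1 (h ▸ List.mem_cons_self (a := z2) (l := rest))
    have hz1S : z1 ∈ c.support := by
      rw [Walk.support_eq_cons c, hzz]; simp
    have hz2S : z2 ∈ c.support := by
      rw [Walk.support_eq_cons c, hzz]; simp
    set x' := if z1 = u then z2 else z1 with hx'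
    have hx'S : x' ∈ c.support := by
      rw [hx']; split <;> assumption
    have hx'u : x' ≠ u := by
      rw [hx']; split
      · rename_i hh; exact fun h => hz12 (hh ▸ h ▸ rfl)
      · assumption
    have hwne : w ≠ u := fun h => hw (h ▸ hu)
    obtain ⟨q0⟩ := (hdel u).preconnected ⟨w, hwne⟩ ⟨x', hx'u⟩
    let f : G.induce {z | z ≠ u} →g G := ⟨Subtype.val, fun {a b} h => h⟩
    have hq1u : u ∉ (q0.map f).support := by
      rw [Walk.support_map]
      intro h
      obtain ⟨⟨z, hz⟩, _, h2⟩ := List.mem_map.mp h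
      exact hz h2
    set q2 := (q0.map f).bypass with hq2
    have hq2p : q2.IsPath := Walk.bypass_isPath _
    have hq2sub : q2.support ⊆ (q0.map f).support := Walk.support_bypass_subset _
    obtain ⟨y, hyS, p', hp'p, hcond, hsub⟩ :=
      trim_walk (S := {z | z ∈ c.support}) q2 hq2p hw hx'S
    have hpu : u ∉ p'.support := fun h => hq1u (hq2sub (hsub h))
    apply hfree
    refine ear_house c hc hlen (Walk.cons hwu.symm p') ?_ ?_ hu hyS ?_ ?_
    · rw [Walk.cons_isPath_iff]; exact ⟨hp'p, hpu⟩
    · have hyp := Walk.end_mem_support p'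
      intro h
      subst h
      exact hpu hyp
    · intro z hz h1 h2
      rw [Walk.support_cons, List.mem_cons] at hz
      rcases hz with rfl | hz
      · exact absurd rfl h1
      · exact hcond z hz h2
    · intro h
      exfalso
      rw [Walk.length_cons] at h
      have h0 : p'.length = 0 := by omega
      have hwy : w = y := Walk.eq_of_length_eq_zero h0
      exact hw (show w ∈ {z | z ∈ c.support} by rw [hwy]; exact hyS)
  -- every edge is on the cycle
  have claim2 : ∀ a b : α, G.Adj a b → s(a, b) ∈ c.edges := by
    intro a b hab
    by_contra hne
    apply hfree
    refine ear_house c hc hlen (Walk.cons hab Walk.nil) ?_ hab.ne (claim1 a) (claim1 b) ?_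
      (fun _ => hne)
    · simp [hab.ne]
    · intro z hz h1 h2
      simp only [Walk.support_cons, Walk.support_nil, List.mem_cons,
        List.mem_singleton, List.not_mem_nil, or_false] at hz
      rcases hz with rfl | rfl
      · exact absurd rfl h1
      · exact absurd rfl h2
  refine ⟨hconn, fun v => ?_⟩
  have hv := claim1 v
  set d := c.rotate v hv with hdd
  have hdc : d.IsCycle := hc.rotate hv
  have hdlen : d.length = c.length := by
    rw [hdd]; unfold Walk.rotate
    rw [Walk.length_append, Nat.add_comm, ← Walk.length_append, Walk.take_spec]
  obtain ⟨a, hva, t, hdt⟩ := Walk.not_nil_iff.mp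
    ((Walk.not_nil_iff_lt_length (p := d)).mpr (by omega))
  have htp : t.IsPath := by
    rw [Walk.isPath_def]
    have := hdc.support_nodup
    rwa [hdt, Walk.support_cons, List.tail_cons] at this
  have hrp : t.reverse.IsPath := htp.reverse
  have htlen : t.length + 1 = d.length := by rw [hdt, Walk.length_cons]
  obtain ⟨b, hvb, s1, hrs⟩ := Walk.not_nil_iff.mp
    ((Walk.not_nil_iff_lt_length (p := t.reverse)).mpr (by rw [Walk.length_reverse]; omega))
  have hs1p : s1.IsPath ∧ v ∉ s1.support := by
    have := hrp; rw [hrs, Walk.cons_isPath_iff] at this; exact this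
  have hab : a ≠ b := by
    rintro rfl
    have hnl := (Walk.isPath_iff_eq_nil (p := s1)).mp hs1p.1
    have hh : t.reverse.length = s1.length + 1 := by rw [hrs, Walk.length_cons]
    rw [hnl, Walk.length_reverse] at hh
    simp only [Walk.length_nil] at hh
    omega
  have hres : G.neighborSet v = {a, b} := by
    ext zz
    simp only [mem_neighborSet, Set.mem_insert_iff, Set.mem_singleton_iff]
    constructor
    · intro hz
      have he : s(v, zz) ∈ d.edges := (Walk.rotate_edges c v hv).mem_iff.mpr (claim2 v zz hz)
      rw [hdt, Walk.edges_cons, List.mem_cons] at he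
      rcases he with he | he
      · rw [Sym2.eq_iff] at he
        rcases he with ⟨-, rfl⟩ | ⟨rfl, rfl⟩
        · exact Or.inl rfl
        · exact absurd rfl hva.ne
      · have he' : s(v, zz) ∈ t.reverse.edges := by
          rw [Walk.edges_reverse, List.mem_reverse]; exact he
        rw [hrs] at he'
        exact Or.inr (edge_start_eq hvb s1 (by rw [← hrs]; exact hrp) he')
    · rintro (rfl | rfl)
      · exact hva
      · exact hvb
  rw [hres]
  exact Set.ncard_pair hab

end HouseHelpers

/-- If `G` is a 2-connected house-minor-free graph containing a cycle of length at
least 5, then `G` is a cycle (connected and 2-regular). -/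
theorem twoConnected_house_minor_free (G : SimpleGraph α) [Fintype α]
    (h2 : TwoConnected G) (hfree : ¬ HasMinor G houseGraph)
    (hcyc : ∃ (x : α) (c : G.Walk x x), c.IsCycle ∧ 5 ≤ c.length) :
    IsCycleGraph G := by
  exact house_free_main G h2.2.1 h2.2.2 hfree hcyc
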